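/- For a cost-minimization over pricing kernels, the map ξ ↦ E[ξ F^{-1}(1 − F̂_ξ(ξ; U))] is concave on any convex set of nonnegative random variables: for ξ₁, ξ₂ and λ ∈ (0,1), letting Z_λ = λξ₁ + (1−λ)ξ₂, one has E[Z_λ F^{-1}(1 − F̂_{Z_λ}(Z_λ; U))] ≥ λ E[ξ₁ F^{-1}(1 − F̂_{ξ₁}(ξ₁; U))] + (1−λ) E[ξ₂ F^{-1}(1 − F̂_{ξ₂}(ξ₂; U))]. -/

import Mathlib

open MeasureTheory ProbabilityTheory Set

/-- The cumulative distribution function of a random variable. -/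
noncomputable def cdfOf {Ω : Type*} [MeasurableSpace Ω] (P : Measure Ω) (X : Ω → ℝ) :
    ℝ → ℝ := fun x => (P {ω | X ω ≤ x}).toReal

/-- The left-continuous generalized inverse (quantile function) of a cdf. -/
noncomputable def quantileOf (F : ℝ → ℝ) (p : ℝ) : ℝ := sInf {x : ℝ | p ≤ F x}

/-- The distributional transform of `ξ`, randomized by `U`. -/
noncomputable def distTransform {Ω : Type*} [MeasurableSpace Ω] (P : Measure Ω)
    (ξ U : Ω → ℝ) : Ω → ℝ :=
  fun ω => (P {a | ξ a < ξ ω}).toReal + U ω * (P {a | ξ a = ξ ω}).toReal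

open Filter Topology

set_option linter.unusedSectionVars false
set_option linter.unusedVariables false
set_option maxHeartbeats 1000000



noncomputable def lcdfOf {Ω : Type*} [MeasurableSpace Ω] (P : Measure Ω) (X : Ω → ℝ) :
    ℝ → ℝ := fun x => (P {ω | X ω < x}).toReal

noncomputable def atomOf {Ω : Type*} [MeasurableSpace Ω] (P : Measure Ω) (X : Ω → ℝ) :
    ℝ → ℝ := fun x => (P {ω | X ω = x}).toReal



section basics
variable {Ω : Type*} [MeasurableSpace Ω] (P : Measure Ω) [IsProbabilityMeasure P]
  {Z : Ω → ℝ} (hZm : Measurable Z)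
include hZm

lemma msIic (x : ℝ) : MeasurableSet {ω | Z ω ≤ x} := hZm measurableSet_Iic
lemma msIio (x : ℝ) : MeasurableSet {ω | Z ω < x} := hZm measurableSet_Iio
lemma msEq (x : ℝ) : MeasurableSet {ω | Z ω = x} := hZm (measurableSet_singleton x)

lemma cdf_mono : Monotone (cdfOf P Z) := by
  intro a b hab
  exact ENNReal.toReal_mono (measure_ne_top _ _)
    (measure_mono (fun ω h => le_trans h hab))

lemma lcdf_mono : Monotone (lcdfOf P Z) := by
  intro a b hab
  exact ENNReal.toReal_mono (measure_ne_top _ _)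
    (measure_mono (fun ω h => lt_of_lt_of_le h hab))

lemma lcdf_le_cdf (x : ℝ) : lcdfOf P Z x ≤ cdfOf P Z x :=
  ENNReal.toReal_mono (measure_ne_top _ _)
    (measure_mono (fun ω (h : Z ω < x) => le_of_lt h))

lemma cdf_nonneg (x : ℝ) : 0 ≤ cdfOf P Z x := ENNReal.toReal_nonneg
lemma lcdf_nonneg (x : ℝ) : 0 ≤ lcdfOf P Z x := ENNReal.toReal_nonneg
lemma atom_nonneg (x : ℝ) : 0 ≤ atomOf P Z x := ENNReal.toReal_nonneg

lemma cdf_le_one (x : ℝ) : cdfOf P Z x ≤ 1 :=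
  ENNReal.toReal_mono (by simp) (prob_le_one (μ := P) (s := {ω | Z ω ≤ x}))

lemma lcdf_le_one (x : ℝ) : lcdfOf P Z x ≤ 1 :=
  ENNReal.toReal_mono (by simp) (prob_le_one (μ := P) (s := {ω | Z ω < x}))

lemma cdf_eq_lcdf_add_atom (x : ℝ) :
    cdfOf P Z x = lcdfOf P Z x + atomOf P Z x := by
  have h : {ω | Z ω ≤ x} = {ω | Z ω < x} ∪ {ω | Z ω = x} := by
    ext ω; simp [le_iff_lt_or_eq]
  have hd : Disjoint {ω | Z ω < x} {ω | Z ω = x} := by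
    rw [Set.disjoint_left]; intro ω h1 h2; simp only [mem_setOf_eq] at *
    exact absurd h2 (ne_of_lt h1)
  rw [cdfOf, lcdfOf, atomOf]
  rw [h, measure_union hd (msEq hZm x),
    ENNReal.toReal_add (measure_ne_top _ _) (measure_ne_top _ _)]

lemma prob_gt_toReal (s : ℝ) :
    (P {ω | s < Z ω}).toReal = 1 - cdfOf P Z s := by
  have h : {ω | s < Z ω} = {ω | Z ω ≤ s}ᶜ := by ext ω; simp [not_le]
  rw [h, measure_compl (msIic hZm s) (measure_ne_top _ _), measure_univ,
    ENNReal.toReal_sub_of_le prob_le_one (by simp)]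
  simp [cdfOf]
end basics

section limits
variable {Ω : Type*} [MeasurableSpace Ω] (P : Measure Ω) [IsProbabilityMeasure P]
  {Z : Ω → ℝ} (hZm : Measurable Z)
include hZm

lemma exists_lcdf_lt {t : ℝ} (ht : 0 < t) : ∃ z : ℝ, lcdfOf P Z z < t := by
  have hs : ∀ n : ℕ, NullMeasurableSet {ω | Z ω < -(n:ℝ)} P :=
    fun n => (hZm measurableSet_Iio).nullMeasurableSet
  have hanti : Antitone (fun n : ℕ => {ω | Z ω < -(n:ℝ)}) := by
    intro n m hnm ω h
    simp only [mem_setOf_eq] at h ⊢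
    have : (n:ℝ) ≤ m := by exact_mod_cast hnm
    linarith
  have hint : (⋂ n : ℕ, {ω | Z ω < -(n:ℝ)}) = ∅ := by
    ext ω; simp only [mem_iInter, mem_setOf_eq, mem_empty_iff_false, iff_false, not_forall, not_lt]
    obtain ⟨n, hn⟩ := exists_nat_ge (-(Z ω))
    exact ⟨n, by linarith⟩
  have h := tendsto_measure_iInter_atTop (μ := P) hs hanti ⟨0, measure_ne_top _ _⟩
  rw [hint] at h
  simp only [measure_empty] at h
  have h2 : Tendsto (fun n : ℕ => lcdfOf P Z (-(n:ℝ))) atTop (𝓝 0) := by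
    have := (ENNReal.tendsto_toReal (a := 0) (by simp)).comp h
    simpa [lcdfOf, Function.comp_def] using this
  obtain ⟨n, hn⟩ := (h2.eventually (eventually_lt_nhds ht)).exists
  exact ⟨-(n:ℝ), hn⟩

lemma exists_lt_lcdf {t : ℝ} (ht : t < 1) : ∃ z : ℝ, t < lcdfOf P Z z := by
  have hmono : Monotone (fun n : ℕ => {ω | Z ω < (n:ℝ)}) := by
    intro n m hnm ω h
    simp only [mem_setOf_eq] at h ⊢
    have : (n:ℝ) ≤ m := by exact_mod_cast hnm
    linarith
  have huni : (⋃ n : ℕ, {ω | Z ω < (n:ℝ)}) = univ := by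
    ext ω; simp only [mem_iUnion, mem_setOf_eq, mem_univ, iff_true]
    obtain ⟨n, hn⟩ := exists_nat_gt (Z ω)
    exact ⟨n, hn⟩
  have h := tendsto_measure_iUnion_atTop (μ := P) hmono
  rw [huni, measure_univ] at h
  have h2 : Tendsto (fun n : ℕ => lcdfOf P Z (n:ℝ)) atTop (𝓝 1) := by
    have := (ENNReal.tendsto_toReal (a := 1) (by simp)).comp h
    simpa [lcdfOf, Function.comp_def] using this
  obtain ⟨n, hn⟩ := (h2.eventually (eventually_gt_nhds ht)).exists
  exact ⟨(n:ℝ), hn⟩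

lemma lcdf_le_of_cdf_lt_le {x t : ℝ} (h : ∀ z, z < x → cdfOf P Z z ≤ t) :
    lcdfOf P Z x ≤ t := by
  have hmono : Monotone (fun n : ℕ => {ω | Z ω ≤ x - 1/(n+1)}) := by
    intro n m hnm ω hω
    simp only [mem_setOf_eq] at hω ⊢
    have h1n : (1:ℝ)/(m+1) ≤ 1/(n+1) := by
      apply one_div_le_one_div_of_le
      · positivity
      · have : (n:ℝ) ≤ m := by exact_mod_cast hnm
        linarith
    linarith
  have huni : (⋃ n : ℕ, {ω | Z ω ≤ x - 1/(n+1)}) = {ω | Z ω < x} := by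
    ext ω
    simp only [mem_iUnion, mem_setOf_eq]
    constructor
    · rintro ⟨n, hn⟩
      have : (0:ℝ) < 1/(n+1) := by positivity
      linarith
    · intro hω
      obtain ⟨n, hn⟩ := exists_nat_one_div_lt (show (0:ℝ) < x - Z ω by linarith)
      exact ⟨n, by linarith⟩
  have h1 := tendsto_measure_iUnion_atTop (μ := P) hmono
  rw [huni] at h1
  have h2 : Tendsto (fun n : ℕ => cdfOf P Z (x - 1/(n+1))) atTop (𝓝 (lcdfOf P Z x)) := by
    have := (ENNReal.tendsto_toReal (measure_ne_top P _)).comp h1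
    simpa [lcdfOf, cdfOf, Function.comp_def] using this
  refine le_of_tendsto h2 (Eventually.of_forall fun n => h _ ?_)
  have : (0:ℝ) < 1/(n+1) := by positivity
  linarith

lemma le_cdf_of_lt_lcdf {x t : ℝ} (h : ∀ z, x < z → t ≤ lcdfOf P Z z) :
    t ≤ cdfOf P Z x := by
  have hs : ∀ n : ℕ, NullMeasurableSet {ω | Z ω < x + 1/(n+1)} P :=
    fun n => (hZm measurableSet_Iio).nullMeasurableSet
  have hanti : Antitone (fun n : ℕ => {ω | Z ω < x + 1/(n+1)}) := by
    intro n m hnm ω hω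
    simp only [mem_setOf_eq] at hω ⊢
    have h1n : (1:ℝ)/(m+1) ≤ 1/(n+1) := by
      apply one_div_le_one_div_of_le
      · positivity
      · have : (n:ℝ) ≤ m := by exact_mod_cast hnm
        linarith
    linarith
  have hint : (⋂ n : ℕ, {ω | Z ω < x + 1/(n+1)}) = {ω | Z ω ≤ x} := by
    ext ω
    simp only [mem_iInter, mem_setOf_eq]
    constructor
    · intro hω
      by_contra hc
      push_neg at hc
      obtain ⟨n, hn⟩ := exists_nat_one_div_lt (show (0:ℝ) < Z ω - x by linarith)
      exact absurd (hω n) (by push_neg; linarith)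
    · intro hω n
      have : (0:ℝ) < 1/(n+1) := by positivity
      linarith
  have h1 := tendsto_measure_iInter_atTop (μ := P) hs hanti ⟨0, measure_ne_top _ _⟩
  rw [hint] at h1
  have h2 : Tendsto (fun n : ℕ => lcdfOf P Z (x + 1/(n+1))) atTop (𝓝 (cdfOf P Z x)) := by
    have := (ENNReal.tendsto_toReal (measure_ne_top P _)).comp h1
    simpa [lcdfOf, cdfOf, Function.comp_def] using this
  refine ge_of_tendsto h2 (Eventually.of_forall fun n => h _ ?_)
  have : (0:ℝ) < 1/(n+1) := by positivity
  linarith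
end limits

section gap
variable {Ω : Type*} [MeasurableSpace Ω] (P : Measure Ω) [IsProbabilityMeasure P]
  {Z : Ω → ℝ} (hZm : Measurable Z)
include hZm

lemma nullgap (s : ℝ) :
    P {ω | s < Z ω ∧ P {a | s < Z a ∧ Z a ≤ Z ω} = 0} = 0 := by
  set T := {ω | s < Z ω ∧ P {a | s < Z a ∧ Z a ≤ Z ω} = 0} with hT
  set C := ⋃ q : ℚ, (if P {a | s < Z a ∧ Z a ≤ (q:ℝ)} = 0
      then {a | s < Z a ∧ Z a ≤ (q:ℝ)} else ∅) with hC
  have hCnull : P C = 0 := by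
    refine measure_iUnion_null fun q => ?_
    split_ifs with h
    · exact h
    · simp
  have hTC : P (T \ C) = 0 := by
    by_cases hne : (T \ C).Nonempty
    · obtain ⟨ω₀, hω₀⟩ := hne
      have hsub : T \ C ⊆ {a | s < Z a ∧ Z a ≤ Z ω₀} := by
        rintro ω ⟨hωT, hωC⟩
        refine ⟨hωT.1, ?_⟩
        by_contra hgt
        push_neg at hgt
        -- Z ω₀ < Z ω ; then ω₀ ∈ C, contradiction
        obtain ⟨q, hq1, hq2⟩ := exists_rat_btwn hgt
        have hqnull : P {a | s < Z a ∧ Z a ≤ (q:ℝ)} = 0 := by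
          refine measure_mono_null (fun a ha => ?_) hωT.2
          exact ⟨ha.1, le_trans ha.2 hq2.le⟩
        exact hω₀.2 (mem_iUnion.2 ⟨q, by rw [if_pos hqnull]; exact ⟨hω₀.1.1, hq1.le⟩⟩)
      exact measure_mono_null hsub hω₀.1.2
    · rw [not_nonempty_iff_eq_empty] at hne
      simp [hne]
  have hsub2 : T ⊆ (T ∩ C) ∪ (T \ C) := by
    intro ω h
    by_cases hc : ω ∈ C
    · exact Or.inl ⟨h, hc⟩
    · exact Or.inr ⟨h, hc⟩
  have : P T ≤ P (T ∩ C) + P (T \ C) :=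
    le_trans (measure_mono hsub2) (measure_union_le _ _)
  have h2 : P (T ∩ C) = 0 := measure_mono_null inter_subset_right hCnull
  exact le_antisymm (by simpa [h2, hTC] using this) zero_le
end gap


section transform
variable {Ω : Type*} [MeasurableSpace Ω] (P : Measure Ω) [IsProbabilityMeasure P]
  {Z U : Ω → ℝ} (hZm : Measurable Z) (hUm : Measurable U)

lemma distTransform_eq (ω : Ω) :
    distTransform P Z U ω = lcdfOf P Z (Z ω) + U ω * atomOf P Z (Z ω) := rfl

lemma measurable_lcdfOf : Measurable (lcdfOf P Z) := by
  have h : Monotone (lcdfOf P Z) := fun a b hab =>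
    ENNReal.toReal_mono (measure_ne_top _ _)
      (measure_mono (fun ω (h : Z ω < a) => lt_of_lt_of_le h hab))
  exact h.measurable

lemma measurable_cdfOf : Measurable (cdfOf P Z) := by
  have h : Monotone (cdfOf P Z) := fun a b hab =>
    ENNReal.toReal_mono (measure_ne_top _ _)
      (measure_mono (fun ω (h : Z ω ≤ a) => le_trans h hab))
  exact h.measurable

include hZm in
lemma measurable_atomOf : Measurable (atomOf P Z) := by
  have h : atomOf P Z = fun x => cdfOf P Z x - lcdfOf P Z x := by
    funext x
    have hset : {ω | Z ω ≤ x} = {ω | Z ω < x} ∪ {ω | Z ω = x} := by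
      ext ω; simp [le_iff_lt_or_eq]
    have hd : Disjoint {ω | Z ω < x} {ω | Z ω = x} := by
      rw [Set.disjoint_left]; intro ω h1 h2; simp only [mem_setOf_eq] at *
      exact absurd h2 (ne_of_lt h1)
    simp only [cdfOf, lcdfOf, atomOf]
    rw [hset, measure_union hd (hZm (measurableSet_singleton x)),
      ENNReal.toReal_add (measure_ne_top _ _) (measure_ne_top _ _)]
    ring
  rw [h]
  exact (measurable_cdfOf P).sub (measurable_lcdfOf P)

include hZm hUm in
lemma measurable_distTransform : Measurable (distTransform P Z U) := by
  have : distTransform P Z U =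
      fun ω => lcdfOf P Z (Z ω) + U ω * atomOf P Z (Z ω) := rfl
  rw [this]
  exact ((measurable_lcdfOf P).comp hZm).add
    (hUm.mul ((measurable_atomOf P hZm).comp hZm))

include hZm in
lemma event_ae_eq (s : ℝ) (hU01 : ∀ᵐ ω ∂P, U ω ∈ Ioo (0:ℝ) 1) :
    {ω | distTransform P Z U ω ≤ cdfOf P Z s} =ᵐ[P] {ω | Z ω ≤ s} := by
  have hgap : P {ω | s < Z ω ∧ P {a | s < Z a ∧ Z a ≤ Z ω} = 0} = 0 :=
    nullgap P hZm s
  rw [Filter.eventuallyEq_set]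
  filter_upwards [hU01, measure_eq_zero_iff_ae_notMem.mp hgap] with ω hU hN
  show distTransform P Z U ω ≤ cdfOf P Z s ↔ Z ω ≤ s
  constructor
  · intro hV
    by_contra hgt
    push_neg at hgt
    -- s < Z ω
    have hlc : cdfOf P Z s ≤ lcdfOf P Z (Z ω) :=
      ENNReal.toReal_mono (measure_ne_top _ _)
        (measure_mono (fun a (ha : Z a ≤ s) => lt_of_le_of_lt ha hgt))
    have hVω := distTransform_eq P (Z := Z) (U := U) ω
    by_cases hat : atomOf P Z (Z ω) = 0
    · -- then mid set must be null
      have hmid : P {a | s < Z a ∧ Z a ≤ Z ω} ≠ 0 := fun h0 => hN ⟨hgt, h0⟩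
      have hmidpos : 0 < (P {a | s < Z a ∧ Z a ≤ Z ω}).toReal :=
        ENNReal.toReal_pos hmid (measure_ne_top _ _)
      -- P{Z ≤ Zω} = P{Z ≤ s} + P{s < Z ≤ Zω}
      have hsplit : cdfOf P Z (Z ω)
          = cdfOf P Z s + (P {a | s < Z a ∧ Z a ≤ Z ω}).toReal := by
        have hset : {a | Z a ≤ Z ω} = {a | Z a ≤ s} ∪ {a | s < Z a ∧ Z a ≤ Z ω} := by
          ext a
          simp only [mem_union, mem_setOf_eq]
          constructor
          · intro h
            rcases le_or_gt (Z a) s with h1 | h1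
            · exact Or.inl h1
            · exact Or.inr ⟨h1, h⟩
          · rintro (h | ⟨h1, h2⟩)
            · exact le_trans h hgt.le
            · exact h2
        have hd : Disjoint {a | Z a ≤ s} {a | s < Z a ∧ Z a ≤ Z ω} := by
          rw [Set.disjoint_left]
          rintro a h1 ⟨h2, _⟩
          simp only [mem_setOf_eq] at h1
          exact absurd h1 (not_le.mpr h2)
        have hms : MeasurableSet {a | s < Z a ∧ Z a ≤ Z ω} := by
          have : {a | s < Z a ∧ Z a ≤ Z ω} = Z ⁻¹' (Ioc s (Z ω)) := rfl
          rw [this]; exact hZm measurableSet_Ioc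
        simp only [cdfOf]
        rw [hset, measure_union hd hms,
          ENNReal.toReal_add (measure_ne_top _ _) (measure_ne_top _ _)]
      -- lcdf(Zω) = cdf(Zω) - atom = cdf(Zω)
      have hcl : lcdfOf P Z (Z ω) ≤ cdfOf P Z (Z ω) :=
        ENNReal.toReal_mono (measure_ne_top _ _)
          (measure_mono (fun a (h : Z a < Z ω) => le_of_lt h))
      -- V ω ≥ lcdf(Zω) ... but we need strict: V ω ≤ cdf s < cdf(Zω) could still allow
      -- use: V ω = lcdf(Zω) + Uω * 0 = lcdf(Zω) and lcdf(Zω) ≥ ?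
      -- lcdf(Zω) = cdf(Zω) - atom(Zω) = cdf(Zω) > cdf s
      have hlcdfeq : lcdfOf P Z (Z ω) = cdfOf P Z (Z ω) := by
        have hset : {a | Z a ≤ Z ω} = {a | Z a < Z ω} ∪ {a | Z a = Z ω} := by
          ext a; simp [le_iff_lt_or_eq]
        have hd : Disjoint {a | Z a < Z ω} {a | Z a = Z ω} := by
          rw [Set.disjoint_left]; intro a h1 h2; simp only [mem_setOf_eq] at *
          exact absurd h2 (ne_of_lt h1)
        simp only [cdfOf, lcdfOf]
        rw [hset, measure_union hd (hZm (measurableSet_singleton (Z ω))),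
          ENNReal.toReal_add (measure_ne_top _ _) (measure_ne_top _ _)]
        have : (P {a | Z a = Z ω}).toReal = 0 := hat
        rw [this, add_zero]
      rw [hVω, hat, mul_zero, add_zero, hlcdfeq, hsplit] at hV
      linarith
    · -- atom > 0, U ω > 0 : V ω > lcdf(Zω) ≥ cdf s
      have hatpos : 0 < atomOf P Z (Z ω) :=
        lt_of_le_of_ne ENNReal.toReal_nonneg (Ne.symm hat)
      have : cdfOf P Z s < distTransform P Z U ω := by
        rw [hVω]
        have : 0 < U ω * atomOf P Z (Z ω) := mul_pos hU.1 hatpos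
        linarith
      linarith
  · intro hω
    rw [distTransform_eq]
    have h1 : lcdfOf P Z (Z ω) + U ω * atomOf P Z (Z ω)
        ≤ lcdfOf P Z (Z ω) + atomOf P Z (Z ω) := by
      have h0 : U ω * atomOf P Z (Z ω) ≤ atomOf P Z (Z ω) :=
        mul_le_of_le_one_left (ENNReal.toReal_nonneg : (0:ℝ) ≤ atomOf P Z (Z ω)) hU.2.le
      linarith
    have h2 : lcdfOf P Z (Z ω) + atomOf P Z (Z ω) = cdfOf P Z (Z ω) := by
      have hset : {a | Z a ≤ Z ω} = {a | Z a < Z ω} ∪ {a | Z a = Z ω} := by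
        ext a; simp [le_iff_lt_or_eq]
      have hd : Disjoint {a | Z a < Z ω} {a | Z a = Z ω} := by
        rw [Set.disjoint_left]; intro a h1 h2; simp only [mem_setOf_eq] at *
        exact absurd h2 (ne_of_lt h1)
      simp only [cdfOf, lcdfOf, atomOf]
      rw [hset, measure_union hd (hZm (measurableSet_singleton (Z ω))),
        ENNReal.toReal_add (measure_ne_top _ _) (measure_ne_top _ _)]
    have h3 : cdfOf P Z (Z ω) ≤ cdfOf P Z s :=
      ENNReal.toReal_mono (measure_ne_top _ _)
        (measure_mono (fun a (h : Z a ≤ Z ω) => le_trans h hω))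
    linarith
end transform

section quantile
variable {Ω : Type*} [MeasurableSpace Ω] (P : Measure Ω) [IsProbabilityMeasure P]
  {X₀ : Ω → ℝ} (hX₀m : Measurable X₀)

noncomputable def PhiOf (P : Measure Ω) (X₀ : Ω → ℝ) : ℝ → ℝ :=
  fun u => if u ∈ Ioo (0:ℝ) 1 then quantileOf (cdfOf P X₀) (1-u) else 0

lemma PhiOf_eq {u : ℝ} (hu : u ∈ Ioo (0:ℝ) 1) :
    PhiOf P X₀ u = quantileOf (cdfOf P X₀) (1-u) := if_pos hu

include hX₀m in
lemma quantile_set_nonempty {p : ℝ} (hp : p < 1) : {x : ℝ | p ≤ cdfOf P X₀ x}.Nonempty := by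
  obtain ⟨z, hz⟩ := exists_lt_lcdf P hX₀m hp
  exact ⟨z, le_trans hz.le (lcdf_le_cdf P hX₀m z)⟩

include hX₀m in
lemma quantile_set_bddBelow {p : ℝ} (hp : 0 < p) : BddBelow {x : ℝ | p ≤ cdfOf P X₀ x} := by
  obtain ⟨z, hz⟩ := exists_lcdf_lt P hX₀m hp
  refine ⟨z, fun x hx => ?_⟩
  by_contra hc
  push_neg at hc
  have h1 : cdfOf P X₀ x ≤ lcdfOf P X₀ z :=
    ENNReal.toReal_mono (measure_ne_top _ _)
      (measure_mono (fun a (h : X₀ a ≤ x) => lt_of_le_of_lt h hc))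
  have h2 : p ≤ cdfOf P X₀ x := hx
  linarith

include hX₀m in
lemma PhiOf_antitoneOn : AntitoneOn (PhiOf P X₀) (Ioo (0:ℝ) 1) := by
  intro u hu v hv huv
  rw [PhiOf_eq P hu, PhiOf_eq P hv]
  refine csInf_le_csInf (quantile_set_bddBelow P hX₀m (by linarith [hv.2] : (0:ℝ) < 1 - v))
    (quantile_set_nonempty P hX₀m (by linarith [hu.1] : 1 - u < 1)) ?_
  intro x hx
  have hx' : 1 - u ≤ cdfOf P X₀ x := hx
  show 1 - v ≤ cdfOf P X₀ x
  linarith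

include hX₀m in
lemma measurable_PhiOf : Measurable (PhiOf P X₀) := by
  apply measurable_of_Iio
  intro y
  have hmain : MeasurableSet (Ioo (0:ℝ) 1 ∩ {u | PhiOf P X₀ u < y}) := by
    have hoc : OrdConnected (Ioo (0:ℝ) 1 ∩ {u | PhiOf P X₀ u < y}) := by
      constructor
      intro a ha b hb w hw
      have hwIoo : w ∈ Ioo (0:ℝ) 1 :=
        ⟨lt_of_lt_of_le ha.1.1 hw.1, lt_of_le_of_lt hw.2 hb.1.2⟩
      refine ⟨hwIoo, ?_⟩
      have := PhiOf_antitoneOn P hX₀m ha.1 hwIoo hw.1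
      exact lt_of_le_of_lt this ha.2
    exact hoc.measurableSet
  by_cases hy : (0:ℝ) < y
  · have hset : PhiOf P X₀ ⁻¹' Iio y
        = (Ioo (0:ℝ) 1 ∩ {u | PhiOf P X₀ u < y}) ∪ (Ioo (0:ℝ) 1)ᶜ := by
      ext u
      by_cases hu : u ∈ Ioo (0:ℝ) 1
      · simp only [mem_preimage, mem_Iio, mem_union, mem_inter_iff, mem_setOf_eq,
          mem_compl_iff, hu, not_true_eq_false, or_false, true_and]
      · simp only [mem_preimage, mem_Iio, mem_union, mem_inter_iff, mem_setOf_eq,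
          mem_compl_iff, hu, not_false_eq_true, or_true, iff_true]
        rw [PhiOf, if_neg hu]
        exact hy
    rw [hset]
    exact hmain.union measurableSet_Ioo.compl
  · have hset : PhiOf P X₀ ⁻¹' Iio y = Ioo (0:ℝ) 1 ∩ {u | PhiOf P X₀ u < y} := by
      ext u
      by_cases hu : u ∈ Ioo (0:ℝ) 1
      · simp only [mem_preimage, mem_Iio, mem_inter_iff, mem_setOf_eq, hu, true_and]
      · simp only [mem_preimage, mem_Iio, mem_inter_iff, mem_setOf_eq, hu, false_and,
          iff_false, not_lt]
        rw [PhiOf, if_neg hu]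
        exact not_lt.mp hy
    rw [hset]
    exact hmain
end quantile
section uniform
variable {Ω : Type*} [MeasurableSpace Ω] (P : Measure Ω) [IsProbabilityMeasure P]
  {Z U : Ω → ℝ} (hZm : Measurable Z) (hUm : Measurable U)

include hUm in
lemma U_mem_Ioo (hU : Measure.map U P = volume.restrict (Ioo (0:ℝ) 1)) :
    ∀ᵐ ω ∂P, U ω ∈ Ioo (0:ℝ) 1 := by
  have h1 : P (U ⁻¹' (Ioo (0:ℝ) 1)) = 1 := by
    rw [← Measure.map_apply hUm measurableSet_Ioo, hU,
      Measure.restrict_apply measurableSet_Ioo]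
    simp [Real.volume_Ioo]
  have h2 : P (U ⁻¹' (Ioo (0:ℝ) 1))ᶜ = 0 := by
    rw [measure_compl (hUm measurableSet_Ioo) (measure_ne_top _ _), h1, measure_univ,
      tsub_self]
  rw [ae_iff]
  convert h2 using 2
  ext ω; simp

include hUm in
lemma U_cdf (hU : Measure.map U P = volume.restrict (Ioo (0:ℝ) 1)) {r : ℝ}
    (hr0 : 0 ≤ r) (hr1 : r ≤ 1) : P {ω | U ω ≤ r} = ENNReal.ofReal r := by
  have : {ω | U ω ≤ r} = U ⁻¹' (Iic r) := rfl
  rw [this, ← Measure.map_apply hUm measurableSet_Iic, hU,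
    Measure.restrict_apply measurableSet_Iic]
  rcases lt_or_eq_of_le hr1 with h | h
  · have : Iic r ∩ Ioo (0:ℝ) 1 = Ioc 0 r := by
      ext u; simp only [mem_inter_iff, mem_Iic, mem_Ioo, mem_Ioc]
      constructor
      · rintro ⟨h1, h2, h3⟩; exact ⟨h2, h1⟩
      · rintro ⟨h1, h2⟩; exact ⟨h2, h1, lt_of_le_of_lt h2 h⟩
    rw [this, Real.volume_Ioc]
    simp
  · subst h
    have : Iic (1:ℝ) ∩ Ioo (0:ℝ) 1 = Ioo 0 1 := by
      ext u; simp only [mem_inter_iff, mem_Iic, mem_Ioo]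
      exact ⟨fun h => h.2, fun h => ⟨h.2.le, h⟩⟩
    rw [this, Real.volume_Ioo]
    norm_num

include hZm hUm in
lemma distTransform_cdf_eq (hU : Measure.map U P = volume.restrict (Ioo (0:ℝ) 1))
    (hind : IndepFun Z U P) {t : ℝ} (ht0 : 0 < t) (ht1 : t < 1) :
    P {ω | distTransform P Z U ω ≤ t} = ENNReal.ofReal t := by
  set S : Set ℝ := {z | lcdfOf P Z z ≤ t} with hS
  obtain ⟨z₀, hz₀⟩ := exists_lcdf_lt P hZm ht0
  have Sne : S.Nonempty := ⟨z₀, hz₀.le⟩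
  obtain ⟨z₁, hz₁⟩ := exists_lt_lcdf P hZm ht1
  have Sbdd : BddAbove S := by
    refine ⟨z₁, fun z hz => ?_⟩
    by_contra hc
    push_neg at hc
    have : lcdfOf P Z z₁ ≤ lcdfOf P Z z := lcdf_mono P hZm hc.le
    have hzS : lcdfOf P Z z ≤ t := hz
    linarith
  set x := sSup S with hx
  have hcdf_lt : ∀ z, z < x → cdfOf P Z z ≤ t := by
    intro z hz
    obtain ⟨z', hz'S, hzz'⟩ := exists_lt_of_lt_csSup Sne hz
    refine le_trans ?_ hz'S
    exact ENNReal.toReal_mono (measure_ne_top _ _)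
      (measure_mono (fun a (h : Z a ≤ z) => lt_of_le_of_lt h hzz'))
  have hlx : lcdfOf P Z x ≤ t := lcdf_le_of_cdf_lt_le P hZm hcdf_lt
  have hgt : ∀ z, x < z → t < lcdfOf P Z z := by
    intro z hz
    by_contra hc
    push_neg at hc
    exact absurd (le_csSup Sbdd hc) (not_le.mpr hz)
  have hcx : t ≤ cdfOf P Z x := le_cdf_of_lt_lcdf P hZm (fun z hz => (hgt z hz).le)
  set p := atomOf P Z x with hp
  have hcdfx : cdfOf P Z x = lcdfOf P Z x + p := cdf_eq_lcdf_add_atom P hZm x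
  -- a.e. event identity
  have hae : {ω | distTransform P Z U ω ≤ t} =ᵐ[P]
      (({ω | Z ω < x} ∪ ({ω | Z ω = x} ∩ {ω | U ω * p ≤ t - lcdfOf P Z x}) : Set Ω)) := by
    rw [Filter.eventuallyEq_set]
    filter_upwards [U_mem_Ioo P hUm hU] with ω hUω
    simp only [mem_union, mem_inter_iff, mem_setOf_eq]
    rw [distTransform_eq]
    rcases lt_trichotomy (Z ω) x with h | h | h
    · constructor
      · intro _; exact Or.inl h
      · intro _
        have h1 : U ω * atomOf P Z (Z ω) ≤ atomOf P Z (Z ω) :=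
          mul_le_of_le_one_left (ENNReal.toReal_nonneg) hUω.2.le
        have h2 := cdf_eq_lcdf_add_atom P hZm (Z ω)
        have h3 := hcdf_lt (Z ω) h
        linarith
    · rw [h]
      constructor
      · intro hV; exact Or.inr ⟨rfl, by linarith⟩
      · rintro (hc | ⟨_, hc⟩)
        · exact absurd rfl (ne_of_lt hc)
        · linarith
    · constructor
      · intro hV
        exfalso
        have h1 : t < lcdfOf P Z (Z ω) := hgt _ h
        have h2 : 0 ≤ U ω * atomOf P Z (Z ω) :=
          mul_nonneg hUω.1.le ENNReal.toReal_nonneg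
        linarith
      · rintro (hc | ⟨hc, _⟩)
        · exact absurd hc (by linarith)
        · exact absurd hc (by intro he; rw [he] at h; exact lt_irrefl x h)
  rw [measure_congr hae]
  have hdisj : Disjoint {ω | Z ω < x} ({ω | Z ω = x} ∩ {ω | U ω * p ≤ t - lcdfOf P Z x}) := by
    rw [Set.disjoint_left]
    rintro ω h1 ⟨h2, _⟩
    simp only [mem_setOf_eq] at h1 h2
    exact absurd h2 (ne_of_lt h1)
  have hmsA : MeasurableSet ({ω | Z ω = x} ∩ {ω | U ω * p ≤ t - lcdfOf P Z x}) := by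
    refine (hZm (measurableSet_singleton x)).inter ?_
    exact (hUm.mul_const p) measurableSet_Iic
  rw [measure_union hdisj hmsA]
  by_cases hp0 : p = 0
  · -- atom is zero
    have hZx : P {ω | Z ω = x} = 0 := by
      have : (P {ω | Z ω = x}).toReal = 0 := hp0
      exact (ENNReal.toReal_eq_zero_iff _).mp this |>.resolve_right (measure_ne_top _ _)
    have h2 : P ({ω | Z ω = x} ∩ {ω | U ω * p ≤ t - lcdfOf P Z x}) = 0 :=
      measure_mono_null inter_subset_left hZx
    rw [h2, add_zero]
    have hlcdfeq : lcdfOf P Z x = t := le_antisymm hlx (by rw [hcdfx, hp0, add_zero] at hcx; exact hcx)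
    have : (P {ω | Z ω < x}).toReal = t := hlcdfeq
    rw [← this, ENNReal.ofReal_toReal (measure_ne_top _ _)]
  · -- atom positive
    have hppos : 0 < p := lt_of_le_of_ne ENNReal.toReal_nonneg (Ne.symm hp0)
    set r := (t - lcdfOf P Z x) / p with hr
    have hA : {ω | U ω * p ≤ t - lcdfOf P Z x} = {ω | U ω ≤ r} := by
      ext ω; simp only [mem_setOf_eq, hr]
      rw [le_div_iff₀ hppos]
    have hr0 : 0 ≤ r := div_nonneg (by linarith) hppos.le
    have hr1 : r ≤ 1 := by
      rw [div_le_one hppos]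
      linarith [hcx, hcdfx]
    have hindep : P ({ω | Z ω = x} ∩ {ω | U ω ≤ r})
        = P {ω | Z ω = x} * P {ω | U ω ≤ r} := by
      have := hind.measure_inter_preimage_eq_mul (s := {x}) (t := Iic r)
        (measurableSet_singleton x) measurableSet_Iic
      convert this using 2
      all_goals rfl
    rw [hA, hindep, U_cdf P hUm hU hr0 hr1]
    -- now: P{Z<x} + P{Z=x} * ofReal r = ofReal t
    have hfin1 : P {ω | Z ω < x} ≠ ⊤ := measure_ne_top _ _
    have hfin2 : P {ω | Z ω = x} ≠ ⊤ := measure_ne_top _ _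
    have htotal : (P {ω | Z ω < x} + P {ω | Z ω = x} * ENNReal.ofReal r).toReal = t := by
      rw [ENNReal.toReal_add hfin1 (ENNReal.mul_ne_top hfin2 (by simp)),
        ENNReal.toReal_mul, ENNReal.toReal_ofReal hr0]
      show lcdfOf P Z x + p * r = t
      rw [hr]
      field_simp
      ring
    rw [← htotal, ENNReal.ofReal_toReal]
    exact ENNReal.add_ne_top.mpr ⟨hfin1, ENNReal.mul_ne_top hfin2 (by simp)⟩

include hZm hUm in
lemma map_distTransform (hU : Measure.map U P = volume.restrict (Ioo (0:ℝ) 1))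
    (hind : IndepFun Z U P) :
    Measure.map (distTransform P Z U) P = volume.restrict (Ioo (0:ℝ) 1) := by
  have hVm : Measurable (distTransform P Z U) := measurable_distTransform P hZm hUm
  haveI : IsProbabilityMeasure (Measure.map (distTransform P Z U) P) :=
    Measure.isProbabilityMeasure_map hVm.aemeasurable
  refine Measure.ext_of_Iic _ _ (fun a => ?_)
  rw [Measure.map_apply hVm measurableSet_Iic, Measure.restrict_apply measurableSet_Iic]
  have key : ∀ t : ℝ, 0 < t → t < 1 →
      P (distTransform P Z U ⁻¹' Iic t) = ENNReal.ofReal t := fun t h0 h1 =>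
    distTransform_cdf_eq P hZm hUm hU hind h0 h1
  rcases le_or_gt a 0 with ha | ha
  · -- left tail : measure 0
    have htarget : Iic a ∩ Ioo (0:ℝ) 1 = ∅ := by
      ext u; simp only [mem_inter_iff, mem_Iic, mem_Ioo, mem_empty_iff_false, iff_false]
      rintro ⟨h1, h2, _⟩; linarith
    rw [htarget, measure_empty]
    have hmono : ∀ n : ℕ, P (distTransform P Z U ⁻¹' Iic a) ≤ ENNReal.ofReal (1/(n+2)) := by
      intro n
      have h2 : (0:ℝ) < 1/(n+2) := by positivity
      have h3 : (1:ℝ)/(n+2) < 1 := by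
        rw [div_lt_one (by positivity)]
        have : (0:ℝ) ≤ n := Nat.cast_nonneg n
        linarith
      rw [← key _ h2 h3]
      exact measure_mono (fun ω (h : distTransform P Z U ω ≤ a) =>
        (le_trans h (by linarith) : distTransform P Z U ω ≤ 1/(n+2)))
    have hlim : Tendsto (fun n : ℕ => ENNReal.ofReal (1/(n+2))) atTop (𝓝 0) := by
      rw [show (0 : ENNReal) = ENNReal.ofReal 0 by simp]
      apply ENNReal.tendsto_ofReal
      have h4 : Tendsto (fun n : ℕ => ((n:ℝ)+2)) atTop atTop :=
        tendsto_atTop_add_const_right _ _ tendsto_natCast_atTop_atTop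
      simpa [one_div, Pi.inv_def] using h4.inv_tendsto_atTop
    exact le_antisymm (ge_of_tendsto' hlim hmono) zero_le
  · rcases lt_or_ge a 1 with ha1 | ha1
    · -- main case
      have htarget : Iic a ∩ Ioo (0:ℝ) 1 = Ioc 0 a := by
        ext u; simp only [mem_inter_iff, mem_Iic, mem_Ioo, mem_Ioc]
        constructor
        · rintro ⟨h1, h2, _⟩; exact ⟨h2, h1⟩
        · rintro ⟨h1, h2⟩; exact ⟨h2, h1, lt_of_le_of_lt h2 ha1⟩
      rw [htarget, Real.volume_Ioc, key a ha ha1]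
      simp
    · -- right tail : measure 1
      have htarget : Iic a ∩ Ioo (0:ℝ) 1 = Ioo 0 1 := by
        ext u; simp only [mem_inter_iff, mem_Iic, mem_Ioo]
        exact ⟨fun h => h.2, fun h => ⟨le_trans h.2.le ha1, h⟩⟩
      rw [htarget, Real.volume_Ioo]
      have hub : P (distTransform P Z U ⁻¹' Iic a) ≤ 1 := prob_le_one
      have hlb : ∀ n : ℕ, ENNReal.ofReal (1 - 1/(n+2)) ≤ P (distTransform P Z U ⁻¹' Iic a) := by
        intro n
        have h2 : (0:ℝ) < 1 - 1/(n+2) := by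
          have h3 : (1:ℝ)/(n+2) < 1 := by
            rw [div_lt_one (by positivity)]
            have : (0:ℝ) ≤ n := Nat.cast_nonneg n
            linarith
          linarith
        have h3 : 1 - 1/((n:ℝ)+2) < 1 := by
          have : (0:ℝ) < 1/(n+2) := by positivity
          linarith
        rw [← key _ h2 h3]
        refine measure_mono (fun ω (h : distTransform P Z U ω ≤ 1 - 1/(n+2)) => ?_)
        show distTransform P Z U ω ≤ a
        linarith
      have hlim : Tendsto (fun n : ℕ => ENNReal.ofReal (1 - 1/(n+2))) atTop (𝓝 1) := by
        rw [show (1 : ENNReal) = ENNReal.ofReal 1 by simp]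
        apply ENNReal.tendsto_ofReal
        have h4 : Tendsto (fun n : ℕ => ((n:ℝ)+2)) atTop atTop :=
          tendsto_atTop_add_const_right _ _ tendsto_natCast_atTop_atTop
        have h5 : Tendsto (fun n : ℕ => (1:ℝ)/(n+2)) atTop (𝓝 0) := by
          simpa [one_div, Pi.inv_def] using h4.inv_tendsto_atTop
        simpa using tendsto_const_nhds.sub h5
      have h1 := le_of_tendsto' hlim hlb
      norm_num
      exact le_antisymm hub h1
end uniform
section layercake
variable {Ω : Type*} [MeasurableSpace Ω] (P : Measure Ω) [IsProbabilityMeasure P]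
  {X g : Ω → ℝ}

lemma layer_aesm (hXm : Measurable X) (hgm : AEStronglyMeasurable g P) :
    AEStronglyMeasurable (fun q : Ω × ℝ => if q.2 < X q.1 then g q.1 else 0)
      (P.prod (volume.restrict (Ioi (0:ℝ)))) := by
  obtain ⟨g', hg'm, hgg'⟩ := hgm
  refine ⟨fun q => if q.2 < X q.1 then g' q.1 else 0, ?_, ?_⟩
  · apply StronglyMeasurable.ite
    · exact measurableSet_lt measurable_snd (hXm.comp measurable_fst)
    · exact hg'm.comp_measurable measurable_fst
    · exact stronglyMeasurable_const
  · have hN : P {ω | g ω ≠ g' ω} = 0 := by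
      have h' : ∀ᵐ ω ∂P, g ω = g' ω := hgg'
      exact ae_iff.mp h'
    rw [Filter.EventuallyEq, ae_iff]
    refine measure_mono_null (fun q hq => ?_)
      (show (P.prod (volume.restrict (Ioi (0:ℝ)))) ({ω | g ω ≠ g' ω} ×ˢ univ) = 0 by
        rw [Measure.prod_prod, hN, zero_mul])
    simp only [mem_setOf_eq] at hq
    constructor
    · intro hc
      apply hq
      split_ifs
      · rw [hc]
      · rfl
    · trivial

lemma layer_integrable (hXm : Measurable X) (hXnn : ∀ ω, 0 ≤ X ω)
    (hgm : AEStronglyMeasurable g P) (hint : Integrable (fun ω => X ω * g ω) P) :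
    Integrable (fun q : Ω × ℝ => if q.2 < X q.1 then g q.1 else 0)
      (P.prod (volume.restrict (Ioi (0:ℝ)))) := by
  rw [integrable_prod_iff (layer_aesm P hXm hgm)]
  constructor
  · refine Eventually.of_forall (fun ω => ?_)
    have heq : (fun s => if s < X ω then g ω else 0)
        = indicator (Iio (X ω)) (fun _ => g ω) := by
      funext s
      simp [indicator, mem_Iio]
    show Integrable (fun s => if s < X ω then g ω else 0) (volume.restrict (Ioi (0:ℝ)))
    rw [heq, integrable_indicator_iff measurableSet_Iio]
    refine (integrableOn_const_iff (C := g ω)).mpr (Or.inr ?_)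
    rw [Measure.restrict_apply measurableSet_Iio]
    calc volume (Iio (X ω) ∩ Ioi 0) = volume (Ioo 0 (X ω)) := by
          congr 1
          ext s; simp only [mem_inter_iff, mem_Iio, mem_Ioi, mem_Ioo]; tauto
      _ < ⊤ := by rw [Real.volume_Ioo]; exact ENNReal.ofReal_lt_top
  · have hcomp : ∀ ω, (∫ s in Ioi (0:ℝ), ‖if s < X ω then g ω else 0‖) = X ω * ‖g ω‖ := by
      intro ω
      have heq : (fun s => ‖if s < X ω then g ω else 0‖)
          = indicator (Iio (X ω)) (fun _ => ‖g ω‖) := by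
        funext s
        by_cases h : s < X ω <;> simp [indicator, mem_Iio, h]
      rw [heq, integral_indicator measurableSet_Iio,
        Measure.restrict_restrict measurableSet_Iio, setIntegral_const]
      have : volume (Iio (X ω) ∩ Ioi 0) = ENNReal.ofReal (X ω) := by
        have h2 : Iio (X ω) ∩ Ioi 0 = Ioo 0 (X ω) := by
          ext s; simp only [mem_inter_iff, mem_Iio, mem_Ioi, mem_Ioo]; tauto
        rw [h2, Real.volume_Ioo, sub_zero]
      rw [measureReal_def, this, ENNReal.toReal_ofReal (hXnn ω)]
      simp [smul_eq_mul]
    have h1 : Integrable (fun ω => X ω * ‖g ω‖) P :=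
      hint.norm.congr (Eventually.of_forall fun ω => by
        show ‖X ω * g ω‖ = X ω * ‖g ω‖
        rw [Real.norm_eq_abs, abs_mul, abs_of_nonneg (hXnn ω), Real.norm_eq_abs])
    exact h1.congr (Eventually.of_forall fun ω => (hcomp ω).symm)

lemma layer_eq (hXm : Measurable X) (hXnn : ∀ ω, 0 ≤ X ω)
    (hgm : AEStronglyMeasurable g P) (hint : Integrable (fun ω => X ω * g ω) P) :
    ∫ ω, X ω * g ω ∂P
      = ∫ s in Ioi (0:ℝ), (∫ ω, (if s < X ω then g ω else 0) ∂P) := by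
  have hswap := integral_integral_swap
    (f := fun ω s => if s < X ω then g ω else 0)
    (μ := P) (ν := volume.restrict (Ioi (0:ℝ)))
    (layer_integrable P hXm hXnn hgm hint)
  rw [← hswap]
  congr 1
  funext ω
  symm
  have heq : (fun s => if s < X ω then g ω else 0)
      = indicator (Iio (X ω)) (fun _ => g ω) := by
    funext s
    simp [indicator, mem_Iio]
  calc (∫ s in Ioi (0:ℝ), if s < X ω then g ω else 0)
      = ∫ s in Ioi (0:ℝ), indicator (Iio (X ω)) (fun _ => g ω) s := by rw [heq]
    _ = X ω * g ω := by
        rw [integral_indicator measurableSet_Iio,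
          Measure.restrict_restrict measurableSet_Iio, setIntegral_const]
        have : volume (Iio (X ω) ∩ Ioi 0) = ENNReal.ofReal (X ω) := by
          have h2 : Iio (X ω) ∩ Ioi 0 = Ioo 0 (X ω) := by
            ext s; simp only [mem_inter_iff, mem_Iio, mem_Ioi, mem_Ioo]; tauto
          rw [h2, Real.volume_Ioo, sub_zero]
        rw [measureReal_def, this, ENNReal.toReal_ofReal (hXnn ω)]
        simp [smul_eq_mul]

lemma layer_sections (hXm : Measurable X) (hXnn : ∀ ω, 0 ≤ X ω)
    (hgm : AEStronglyMeasurable g P) (hint : Integrable (fun ω => X ω * g ω) P) :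
    ∀ᵐ s ∂(volume.restrict (Ioi (0:ℝ))),
      Integrable (fun ω => if s < X ω then g ω else 0) P := by
  have h := (layer_integrable P hXm hXnn hgm hint).swap
  have h2 := (integrable_prod_iff h.aestronglyMeasurable).mp h
  exact h2.1

lemma layer_outer_integrable (hXm : Measurable X) (hXnn : ∀ ω, 0 ≤ X ω)
    (hgm : AEStronglyMeasurable g P) (hint : Integrable (fun ω => X ω * g ω) P) :
    Integrable (fun s => ∫ ω, (if s < X ω then g ω else 0) ∂P)
      (volume.restrict (Ioi (0:ℝ))) := by
  have h := (layer_integrable P hXm hXnn hgm hint).swap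
  exact h.integral_prod_left
end layercake
section keystep
variable {Ω : Type*} [MeasurableSpace Ω] (P : Measure Ω) [IsProbabilityMeasure P]
  {X₀ X V Vx : Ω → ℝ}

lemma V_prob_gt (hVm : Measurable V)
    (hmapV : Measure.map V P = volume.restrict (Ioo (0:ℝ) 1))
    {b : ℝ} (hb0 : 0 ≤ b) (hb1 : b ≤ 1) :
    P {ω | b < V ω} = ENNReal.ofReal (1 - b) := by
  have : {ω | b < V ω} = V ⁻¹' (Ioi b) := rfl
  rw [this, ← Measure.map_apply hVm measurableSet_Ioi, hmapV,
    Measure.restrict_apply measurableSet_Ioi]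
  have h2 : Ioi b ∩ Ioo (0:ℝ) 1 = Ioo b 1 := by
    ext u
    simp only [mem_inter_iff, mem_Ioi, mem_Ioo]
    constructor
    · rintro ⟨h1, _, h3⟩; exact ⟨h1, h3⟩
    · rintro ⟨h1, h2⟩; exact ⟨h1, lt_of_le_of_lt hb0 h1, h2⟩
  rw [h2, Real.volume_Ioo]

lemma key_step (hX₀m : Measurable X₀) (hXm : Measurable X)
    (hVm : Measurable V) (hVxm : Measurable Vx)
    (hmapV : Measure.map V P = volume.restrict (Ioo (0:ℝ) 1))
    (hmapVx : Measure.map Vx P = volume.restrict (Ioo (0:ℝ) 1))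
    (s : ℝ)
    (hevx : ({ω | Vx ω ≤ cdfOf P X s} : Set Ω) =ᵐ[P] ({ω | X ω ≤ s} : Set Ω))
    (h₁ : Integrable (fun ω => if s < X ω then PhiOf P X₀ (Vx ω) else 0) P)
    (h₂ : Integrable (fun ω => if s < X ω then PhiOf P X₀ (V ω) else 0) P) :
    ∫ ω, (if s < X ω then PhiOf P X₀ (Vx ω) else 0) ∂P
      ≤ ∫ ω, (if s < X ω then PhiOf P X₀ (V ω) else 0) ∂P := by
  set Φ := PhiOf P X₀ with hΦ
  set b := cdfOf P X s with hb
  have hb0 : 0 ≤ b := cdf_nonneg P hXm s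
  have hb1 : b ≤ 1 := cdf_le_one P hXm s
  set G : ℝ → ℝ := fun u => if b < u then Φ u else 0 with hG
  have hΦm : Measurable Φ := measurable_PhiOf P hX₀m
  have hGm : Measurable G := by
    refine Measurable.ite ?_ hΦm measurable_const
    exact measurableSet_Ioi
  -- almost sure iff between events
  have hiff : ∀ᵐ ω ∂P, (Vx ω ≤ b ↔ X ω ≤ s) := Filter.eventuallyEq_set.mp hevx
  -- f₁ = G ∘ Vx a.e.
  have hf₁ : (fun ω => if s < X ω then Φ (Vx ω) else 0) =ᵐ[P] (fun ω => G (Vx ω)) := by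
    filter_upwards [hiff] with ω hω
    by_cases hxs : s < X ω
    · have hbv : b < Vx ω := by
        by_contra hc
        push_neg at hc
        exact absurd (hω.mp hc) (not_le.mpr hxs)
      rw [if_pos hxs, hG]
      simp only
      rw [if_pos hbv]
    · have hbv : ¬ b < Vx ω := by
        intro hc
        exact absurd (hω.mpr (not_lt.mp hxs)) (not_le.mpr hc)
      rw [if_neg hxs, hG]
      simp only
      rw [if_neg hbv]
  have hGVx_int : Integrable (fun ω => G (Vx ω)) P := h₁.congr hf₁
  have hGunif : Integrable G (volume.restrict (Ioo (0:ℝ) 1)) := by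
    rw [← hmapVx]
    exact (integrable_map_measure hGm.aestronglyMeasurable hVxm.aemeasurable).mpr hGVx_int
  have hGV_int : Integrable (fun ω => G (V ω)) P := by
    have := (integrable_map_measure hGm.aestronglyMeasurable hVm.aemeasurable).mp
      (by rw [hmapV]; exact hGunif)
    exact this
  -- ∫ f₁ = ∫ G∘Vx = ∫ G dunif = ∫ G∘V =: T
  have hI1 : ∫ ω, (if s < X ω then Φ (Vx ω) else 0) ∂P = ∫ ω, G (V ω) ∂P := by
    rw [integral_congr_ae hf₁]
    have e1 : ∫ ω, G (Vx ω) ∂P = ∫ u, G u ∂(Measure.map Vx P) :=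
      (integral_map hVxm.aemeasurable hGm.aestronglyMeasurable).symm
    have e2 : ∫ u, G u ∂(Measure.map V P) = ∫ ω, G (V ω) ∂P :=
      integral_map hVm.aemeasurable hGm.aestronglyMeasurable
    rw [e1, hmapVx, ← hmapV, e2]
  rw [hI1]
  -- remains : ∫ G∘V ≤ ∫ f₂
  have hVIoo : ∀ᵐ ω ∂P, V ω ∈ Ioo (0:ℝ) 1 := U_mem_Ioo P hVm hmapV
  rcases eq_or_lt_of_le hb0 with hb0' | hb0'
  · -- b = 0 : a.e. X ω > s and V ω > 0 = b, so f₂ = G∘V a.e.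
    have hXnull : P {ω | X ω ≤ s} = 0 := by
      have : (P {ω | X ω ≤ s}).toReal = 0 := hb0'.symm
      exact ((ENNReal.toReal_eq_zero_iff _).mp this).resolve_right (measure_ne_top _ _)
    have hae : (fun ω => G (V ω)) =ᵐ[P] (fun ω => if s < X ω then Φ (V ω) else 0) := by
      filter_upwards [hVIoo, measure_eq_zero_iff_ae_notMem.mp hXnull] with ω hV hX
      have hxs : s < X ω := not_le.mp hX
      have hbv : b < V ω := hb0' ▸ hV.1
      simp only [hG, if_pos hxs, if_pos hbv]
    exact le_of_eq (integral_congr_ae hae)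
  · rcases eq_or_lt_of_le hb1 with hb1' | hb1'
    · -- b = 1 : a.e. X ω ≤ s and V ω < 1 = b, so both sides vanish a.e.
      have hXnull : P {ω | s < X ω} = 0 := by
        have h1 : (P {ω | s < X ω}).toReal = 1 - b := prob_gt_toReal P hXm s
        rw [← hb1'] at h1
        simp only [sub_self] at h1
        exact ((ENNReal.toReal_eq_zero_iff _).mp h1).resolve_right (measure_ne_top _ _)
      have hae : (fun ω => G (V ω)) =ᵐ[P] (fun ω => if s < X ω then Φ (V ω) else 0) := by
        filter_upwards [hVIoo, measure_eq_zero_iff_ae_notMem.mp hXnull] with ω hV hX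
        have hxs : ¬ s < X ω := hX
        have hbv : ¬ b < V ω := by rw [hb1']; exact not_lt.mpr hV.2.le
        simp only [hG, if_neg hxs, if_neg hbv]
      exact le_of_eq (integral_congr_ae hae)
    · -- 0 < b < 1 : bathtub principle
      set c := Φ b with hc
      have hbIoo : b ∈ Ioo (0:ℝ) 1 := ⟨hb0', hb1'⟩
      have hpt : ∀ᵐ ω ∂P,
          c * ((if s < X ω then (1:ℝ) else 0) - (if b < V ω then (1:ℝ) else 0))
            ≤ (if s < X ω then Φ (V ω) else 0) - G (V ω) := by
        filter_upwards [hVIoo] with ω hV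
        by_cases hxs : s < X ω <;> by_cases hbv : b < V ω
        · simp only [hG, if_pos hxs, if_pos hbv]
          simp
        · simp only [hG, if_pos hxs, if_neg hbv]
          have hφ : c ≤ Φ (V ω) :=
            PhiOf_antitoneOn P hX₀m hV hbIoo (not_lt.mp hbv)
          linarith
        · simp only [hG, if_neg hxs, if_pos hbv]
          have hφ : Φ (V ω) ≤ c :=
            PhiOf_antitoneOn P hX₀m hbIoo hV hbv.le
          linarith
        · simp only [hG, if_neg hxs, if_neg hbv]
          simp
      have hind1 : Integrable (fun ω => if s < X ω then (1:ℝ) else 0) P := by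
        have : (fun ω => if s < X ω then (1:ℝ) else 0)
            = indicator {ω | s < X ω} (fun _ => (1:ℝ)) := by
          funext ω; simp [indicator]
        rw [this]
        exact (integrable_const (1:ℝ)).indicator (hXm measurableSet_Ioi)
      have hind2 : Integrable (fun ω => if b < V ω then (1:ℝ) else 0) P := by
        have : (fun ω => if b < V ω then (1:ℝ) else 0)
            = indicator {ω | b < V ω} (fun _ => (1:ℝ)) := by
          funext ω; simp [indicator]
        rw [this]
        exact (integrable_const (1:ℝ)).indicator (hVm measurableSet_Ioi)
      have hL : Integrable (fun ω =>
          c * ((if s < X ω then (1:ℝ) else 0) - (if b < V ω then (1:ℝ) else 0))) P :=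
        (hind1.sub hind2).const_mul c
      have hR : Integrable (fun ω =>
          (if s < X ω then Φ (V ω) else 0) - G (V ω)) P := h₂.sub hGV_int
      have hmono := integral_mono_ae hL hR hpt
      have hIind1 : ∫ ω, (if s < X ω then (1:ℝ) else 0) ∂P = 1 - b := by
        have h0 : ∫ ω, (if s < X ω then (1:ℝ) else 0) ∂P
            = ∫ ω, indicator {ω | s < X ω} (fun _ => (1:ℝ)) ω ∂P :=
          integral_congr_ae (Eventually.of_forall fun ω => by simp [indicator])
        rw [h0, integral_indicator (show MeasurableSet {ω | s < X ω} from hXm measurableSet_Ioi),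
          setIntegral_const, measureReal_def, prob_gt_toReal P hXm s]
        simp
        rfl
      have hIind2 : ∫ ω, (if b < V ω then (1:ℝ) else 0) ∂P = 1 - b := by
        have h0 : ∫ ω, (if b < V ω then (1:ℝ) else 0) ∂P
            = ∫ ω, indicator {ω | b < V ω} (fun _ => (1:ℝ)) ω ∂P :=
          integral_congr_ae (Eventually.of_forall fun ω => by simp [indicator])
        rw [h0, integral_indicator (show MeasurableSet {ω | b < V ω} from hVm measurableSet_Ioi),
          setIntegral_const, measureReal_def, V_prob_gt P hVm hmapV hb0 hb1, ENNReal.toReal_ofReal (by linarith)]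
        simp
      rw [integral_const_mul, integral_sub hind1 hind2, hIind1, hIind2, sub_self, mul_zero,
        integral_sub h₂ hGV_int] at hmono
      linarith
end keystep

/-- Concavity of the map `ξ ↦ E[ξ F⁻¹(1 − F̂_ξ(ξ; U))]` on nonnegative random variables:
for `Z_λ = λξ₁ + (1−λ)ξ₂` the value at `Z_λ` dominates the convex combination of the
values at `ξ₁` and `ξ₂`. -/
theorem stmt_10 {Ω : Type*} [MeasurableSpace Ω] (P : Measure Ω) [IsProbabilityMeasure P]
    (X₀ : Ω → ℝ) (hX₀m : Measurable X₀)   -- represents the fixed cdf F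
    (ξ₁ ξ₂ U : Ω → ℝ) (hξ₁m : Measurable ξ₁) (hξ₂m : Measurable ξ₂) (hUm : Measurable U)
    (hξ₁nn : ∀ ω, 0 ≤ ξ₁ ω) (hξ₂nn : ∀ ω, 0 ≤ ξ₂ ω)
    (l : ℝ) (hl0 : 0 < l) (hl1 : l < 1)
    (Zl : Ω → ℝ) (hZl : Zl = fun ω => l * ξ₁ ω + (1 - l) * ξ₂ ω)
    (hU : Measure.map U P = (MeasureTheory.volume.restrict (Set.Ioo (0:ℝ) 1)))
    (hindep1 : ProbabilityTheory.IndepFun ξ₁ U P)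
    (hindep2 : ProbabilityTheory.IndepFun ξ₂ U P)
    (hindepl : ProbabilityTheory.IndepFun Zl U P)
    (hint1 : Integrable (fun ω =>
      ξ₁ ω * quantileOf (cdfOf P X₀) (1 - distTransform P ξ₁ U ω)) P)
    (hint2 : Integrable (fun ω =>
      ξ₂ ω * quantileOf (cdfOf P X₀) (1 - distTransform P ξ₂ U ω)) P)
    (hintl : Integrable (fun ω =>
      Zl ω * quantileOf (cdfOf P X₀) (1 - distTransform P Zl U ω)) P)
    (hint1l : Integrable (fun ω =>
      ξ₁ ω * quantileOf (cdfOf P X₀) (1 - distTransform P Zl U ω)) P)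
    (hint2l : Integrable (fun ω =>
      ξ₂ ω * quantileOf (cdfOf P X₀) (1 - distTransform P Zl U ω)) P) :
    l * ∫ ω, ξ₁ ω * quantileOf (cdfOf P X₀) (1 - distTransform P ξ₁ U ω) ∂P
      + (1 - l) * ∫ ω, ξ₂ ω * quantileOf (cdfOf P X₀) (1 - distTransform P ξ₂ U ω) ∂P
    ≤ ∫ ω, Zl ω * quantileOf (cdfOf P X₀) (1 - distTransform P Zl U ω) ∂P := by
  have hZlm : Measurable Zl := by
    rw [hZl]
    exact (hξ₁m.const_mul l).add (hξ₂m.const_mul (1-l))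
  have hZlnn : ∀ ω, 0 ≤ Zl ω := by
    intro ω
    rw [hZl]
    have := hξ₁nn ω; have := hξ₂nn ω
    have h1 : 0 ≤ l * ξ₁ ω := mul_nonneg hl0.le (hξ₁nn ω)
    have h2 : 0 ≤ (1-l) * ξ₂ ω := mul_nonneg (by linarith) (hξ₂nn ω)
    simpa using add_nonneg h1 h2
  set Φ := PhiOf P X₀ with hΦdef
  have hΦm : Measurable Φ := measurable_PhiOf P hX₀m
  set V := distTransform P Zl U with hVdef
  set V₁ := distTransform P ξ₁ U with hV₁def
  set V₂ := distTransform P ξ₂ U with hV₂def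
  have hVm : Measurable V := measurable_distTransform P hZlm hUm
  have hV₁m : Measurable V₁ := measurable_distTransform P hξ₁m hUm
  have hV₂m : Measurable V₂ := measurable_distTransform P hξ₂m hUm
  have hU01 : ∀ᵐ ω ∂P, U ω ∈ Ioo (0:ℝ) 1 := U_mem_Ioo P hUm hU
  have hmapV : Measure.map V P = volume.restrict (Ioo (0:ℝ) 1) :=
    map_distTransform P hZlm hUm hU hindepl
  have hmapV₁ : Measure.map V₁ P = volume.restrict (Ioo (0:ℝ) 1) :=
    map_distTransform P hξ₁m hUm hU hindep1
  have hmapV₂ : Measure.map V₂ P = volume.restrict (Ioo (0:ℝ) 1) :=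
    map_distTransform P hξ₂m hUm hU hindep2
  have hVIoo : ∀ᵐ ω ∂P, V ω ∈ Ioo (0:ℝ) 1 := U_mem_Ioo P hVm hmapV
  have hV₁Ioo : ∀ᵐ ω ∂P, V₁ ω ∈ Ioo (0:ℝ) 1 := U_mem_Ioo P hV₁m hmapV₁
  have hV₂Ioo : ∀ᵐ ω ∂P, V₂ ω ∈ Ioo (0:ℝ) 1 := U_mem_Ioo P hV₂m hmapV₂
  -- replace quantile by Φ almost everywhere
  have hq : ∀ (W ξ : Ω → ℝ), (∀ᵐ ω ∂P, W ω ∈ Ioo (0:ℝ) 1) →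
      (fun ω => ξ ω * quantileOf (cdfOf P X₀) (1 - W ω)) =ᵐ[P] (fun ω => ξ ω * Φ (W ω)) := by
    intro W ξ hW
    filter_upwards [hW] with ω hω
    rw [hΦdef, PhiOf_eq P hω]
  have hae1 := hq V₁ ξ₁ hV₁Ioo
  have hae2 := hq V₂ ξ₂ hV₂Ioo
  have haeL := hq V Zl hVIoo
  have hae1l := hq V ξ₁ hVIoo
  have hae2l := hq V ξ₂ hVIoo
  have hint1' : Integrable (fun ω => ξ₁ ω * Φ (V₁ ω)) P := hint1.congr hae1
  have hint2' : Integrable (fun ω => ξ₂ ω * Φ (V₂ ω)) P := hint2.congr hae2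
  have hintl' : Integrable (fun ω => Zl ω * Φ (V ω)) P := hintl.congr haeL
  have hint1l' : Integrable (fun ω => ξ₁ ω * Φ (V ω)) P := hint1l.congr hae1l
  have hint2l' : Integrable (fun ω => ξ₂ ω * Φ (V ω)) P := hint2l.congr hae2l
  rw [integral_congr_ae hae1, integral_congr_ae hae2, integral_congr_ae haeL]
  -- linearity
  have hlin : ∫ ω, Zl ω * Φ (V ω) ∂P
      = l * ∫ ω, ξ₁ ω * Φ (V ω) ∂P + (1-l) * ∫ ω, ξ₂ ω * Φ (V ω) ∂P := by
    have hfun : (fun ω => Zl ω * Φ (V ω))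
        = fun ω => l * (ξ₁ ω * Φ (V ω)) + (1-l) * (ξ₂ ω * Φ (V ω)) := by
      funext ω
      rw [hZl]
      ring
    rw [hfun, integral_add (hint1l'.const_mul l) (hint2l'.const_mul (1-l)),
      integral_const_mul, integral_const_mul]
  rw [hlin]
  -- key inequality for each component
  have hkey : ∀ (ξ : Ω → ℝ) (hξm : Measurable ξ) (hξnn : ∀ ω, 0 ≤ ξ ω)
      (W : Ω → ℝ) (hWm : Measurable W)
      (hmapW : Measure.map W P = volume.restrict (Ioo (0:ℝ) 1))
      (hWdt : W = distTransform P ξ U)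
      (hiξ : Integrable (fun ω => ξ ω * Φ (W ω)) P)
      (hiξl : Integrable (fun ω => ξ ω * Φ (V ω)) P),
      ∫ ω, ξ ω * Φ (W ω) ∂P ≤ ∫ ω, ξ ω * Φ (V ω) ∂P := by
    intro ξ hξm hξnn W hWm hmapW hWdt hiξ hiξl
    have hgWm : AEStronglyMeasurable (fun ω => Φ (W ω)) P :=
      (hΦm.comp hWm).aestronglyMeasurable
    have hgVm : AEStronglyMeasurable (fun ω => Φ (V ω)) P :=
      (hΦm.comp hVm).aestronglyMeasurable
    rw [layer_eq P hξm hξnn hgWm hiξ, layer_eq P hξm hξnn hgVm hiξl]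
    refine integral_mono_ae (layer_outer_integrable P hξm hξnn hgWm hiξ)
      (layer_outer_integrable P hξm hξnn hgVm hiξl) ?_
    filter_upwards [layer_sections P hξm hξnn hgWm hiξ,
      layer_sections P hξm hξnn hgVm hiξl] with s hs1 hs2
    have hev : ({ω | W ω ≤ cdfOf P ξ s} : Set Ω) =ᵐ[P] ({ω | ξ ω ≤ s} : Set Ω) := by
      rw [hWdt]
      exact event_ae_eq P hξm s hU01
    exact key_step P hX₀m hξm hVm hWm hmapV hmapW s hev hs1 hs2
  have hk1 := hkey ξ₁ hξ₁m hξ₁nn V₁ hV₁m hmapV₁ hV₁def hint1' hint1l'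
  have hk2 := hkey ξ₂ hξ₂m hξ₂nn V₂ hV₂m hmapV₂ hV₂def hint2' hint2l'
  have h1 : l * ∫ ω, ξ₁ ω * Φ (V₁ ω) ∂P ≤ l * ∫ ω, ξ₁ ω * Φ (V ω) ∂P :=
    mul_le_mul_of_nonneg_left hk1 hl0.le
  have h2 : (1-l) * ∫ ω, ξ₂ ω * Φ (V₂ ω) ∂P ≤ (1-l) * ∫ ω, ξ₂ ω * Φ (V ω) ∂P :=
    mul_le_mul_of_nonneg_left hk2 (by linarith)
  linarith
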